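/- Every simple module over the twisted algebra A is 2-dimensional as a complex vector space: if M is a nonzero A-module with no submodules other than 0 and M, then dim_ℂ M = 2. -/

import Mathlib

open Matrix

/-- Generators of the twisted algebra: s, x, x', y, y'. -/
inductive TwGen | s | x | x' | y | y'

/-- The defining relations of the twisted group algebra
ℂ[(ℤ ⋊ ℤ/2) × ℤ, μ]: s² = 1, x·x' = x'·x = 1, y·y' = y'·y = 1,
s·x = x'·s, s·y = −y·s, x·y = y·x. -/
inductive TwRel : FreeAlgebra ℂ TwGen → FreeAlgebra ℂ TwGen → Prop
  | s_sq : TwRel (FreeAlgebra.ι ℂ TwGen.s * FreeAlgebra.ι ℂ TwGen.s) 1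
  | xx' : TwRel (FreeAlgebra.ι ℂ TwGen.x * FreeAlgebra.ι ℂ TwGen.x') 1
  | x'x : TwRel (FreeAlgebra.ι ℂ TwGen.x' * FreeAlgebra.ι ℂ TwGen.x) 1
  | yy' : TwRel (FreeAlgebra.ι ℂ TwGen.y * FreeAlgebra.ι ℂ TwGen.y') 1
  | y'y : TwRel (FreeAlgebra.ι ℂ TwGen.y' * FreeAlgebra.ι ℂ TwGen.y) 1
  | sx : TwRel (FreeAlgebra.ι ℂ TwGen.s * FreeAlgebra.ι ℂ TwGen.x)
      (FreeAlgebra.ι ℂ TwGen.x' * FreeAlgebra.ι ℂ TwGen.s)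
  | sy : TwRel (FreeAlgebra.ι ℂ TwGen.s * FreeAlgebra.ι ℂ TwGen.y)
      (-(FreeAlgebra.ι ℂ TwGen.y * FreeAlgebra.ι ℂ TwGen.s))
  | xy : TwRel (FreeAlgebra.ι ℂ TwGen.x * FreeAlgebra.ι ℂ TwGen.y)
      (FreeAlgebra.ι ℂ TwGen.y * FreeAlgebra.ι ℂ TwGen.x)

/-- The twisted algebra A = ℂ[(ℤ ⋊ ℤ/2) × ℤ, μ], presented by generators and
relations. -/
abbrev TwAlg := RingQuot TwRel


namespace TwAux

noncomputable def g (t : TwGen) : TwAlg := RingQuot.mkAlgHom ℂ TwRel (FreeAlgebra.ι ℂ t)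

local notation "S" => g TwGen.s
local notation "X" => g TwGen.x
local notation "X'" => g TwGen.x'
local notation "Y" => g TwGen.y
local notation "Y'" => g TwGen.y'

lemma rel {a b : FreeAlgebra ℂ TwGen} (h : TwRel a b) :
    RingQuot.mkAlgHom ℂ TwRel a = RingQuot.mkAlgHom ℂ TwRel b :=
  RingQuot.mkAlgHom_rel ℂ h

lemma rSS : S * S = 1 := by simpa [g] using rel TwRel.s_sq
lemma rXX' : X * X' = 1 := by simpa [g] using rel TwRel.xx'
lemma rX'X : X' * X = 1 := by simpa [g] using rel TwRel.x'x
lemma rYY' : Y * Y' = 1 := by simpa [g] using rel TwRel.yy'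
lemma rY'Y : Y' * Y = 1 := by simpa [g] using rel TwRel.y'y
lemma rSX : S * X = X' * S := by simpa [g] using rel TwRel.sx
lemma rSY : S * Y = -(Y * S) := by simpa [g] using rel TwRel.sy
lemma rXY : X * Y = Y * X := by simpa [g] using rel TwRel.xy

lemma conj_comm {a b c : TwAlg} (hab : a * b = b * a) (h1 : a * c = 1) (h2 : c * a = 1) :
    c * b = b * c := by
  calc c * b = c * b * (a * c) := by rw [h1, mul_one]
    _ = c * (b * a) * c := by simp only [mul_assoc]
    _ = c * (a * b) * c := by rw [hab]
    _ = (c * a) * (b * c) := by simp only [mul_assoc]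
    _ = b * c := by rw [h2, one_mul]

lemma rX'Y : X' * Y = Y * X' := conj_comm rXY rXX' rX'X
lemma rY'X : Y' * X = X * Y' := conj_comm rXY.symm rYY' rY'Y
lemma rX'Y' : X' * Y' = Y' * X' := conj_comm rY'X.symm rXX' rX'X

/-- X S = S X' -/
lemma rXS : X * S = S * X' := by
  calc X * S = X * S * (X * X') := by rw [rXX', mul_one]
    _ = X * (S * X) * X' := by simp only [mul_assoc]
    _ = X * (X' * S) * X' := by rw [rSX]
    _ = (X * X') * (S * X') := by simp only [mul_assoc]
    _ = S * X' := by rw [rXX', one_mul]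

lemma rYS : Y * S = -(S * Y) := by
  rw [rSY, neg_neg]

/-- Y' S = -(S Y') -/
lemma rY'S : Y' * S = -(S * Y') := by
  have h1 : Y' * (S * Y) * Y' = Y' * -(Y * S) * Y' := by rw [rSY]
  calc Y' * S = Y' * S * (Y * Y') := by rw [rYY', mul_one]
    _ = Y' * (S * Y) * Y' := by simp only [mul_assoc]
    _ = Y' * -(Y * S) * Y' := by rw [rSY]
    _ = -(Y' * (Y * S)) * Y' := by
        exact congrArg (fun t => t * Y') (mul_neg Y' (Y * S))
    _ = -(Y' * (Y * S) * Y') := by exact neg_mul (Y' * (Y * S)) Y'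
    _ = -(((Y' * Y) * S) * Y') := by
        exact congrArg (fun t => -t)
          (by noncomm_ring : Y' * (Y * S) * Y' = ((Y' * Y) * S) * Y')
    _ = -(S * Y') := by rw [rY'Y, one_mul]

noncomputable def cU : TwAlg := X + X'
noncomputable def cV : TwAlg := Y * Y

lemma central_of_gen_comm {z : TwAlg} (h : ∀ t : TwGen, g t * z = z * g t) :
    ∀ a : TwAlg, a * z = z * a := by
  intro a
  obtain ⟨p, rfl⟩ := RingQuot.mkAlgHom_surjective ℂ TwRel a
  induction p using FreeAlgebra.induction with
  | grade0 r => rw [AlgHom.commutes]; exact Algebra.commutes r z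
  | grade1 t => exact h t
  | mul a b ha hb =>
      rw [_root_.map_mul, mul_assoc, hb, ← mul_assoc, ha, mul_assoc]
  | add a b ha hb => rw [_root_.map_add, add_mul, mul_add, ha, hb]

lemma cU_central : ∀ a : TwAlg, a * cU = cU * a := by
  apply central_of_gen_comm
  intro t
  cases t with
  | s => show S * (X + X') = (X + X') * S
         rw [mul_add, add_mul, rSX, ← rXS]; exact add_comm _ _
  | x => show X * (X + X') = (X + X') * X
         rw [mul_add, add_mul, rXX', rX'X]
  | x' => show X' * (X + X') = (X + X') * X'
          rw [mul_add, add_mul, rXX', rX'X]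
  | y => show Y * (X + X') = (X + X') * Y
         rw [mul_add, add_mul, ← rXY, ← rX'Y]
  | y' => show Y' * (X + X') = (X + X') * Y'
          rw [mul_add, add_mul, rY'X, ← rX'Y']

lemma cV_central : ∀ a : TwAlg, a * cV = cV * a := by
  apply central_of_gen_comm
  intro t
  cases t with
  | s => show S * (Y * Y) = (Y * Y) * S
         calc S * (Y * Y) = (S * Y) * Y := (mul_assoc _ _ _).symm
           _ = -(Y * S) * Y := by rw [rSY]
           _ = -((Y * S) * Y) := by exact neg_mul (Y * S) Y
           _ = -(Y * (S * Y)) := by rw [mul_assoc]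
           _ = -(Y * -(Y * S)) := by rw [rSY]
           _ = -(-(Y * (Y * S))) := by exact congrArg (fun t => -t) (mul_neg Y (Y * S))
           _ = Y * (Y * S) := by exact neg_neg (Y * (Y * S))
           _ = (Y * Y) * S := (mul_assoc _ _ _).symm
  | x => show X * (Y * Y) = (Y * Y) * X
         calc X * (Y * Y) = (X * Y) * Y := (mul_assoc _ _ _).symm
           _ = (Y * X) * Y := by rw [rXY]
           _ = Y * (X * Y) := mul_assoc _ _ _
           _ = Y * (Y * X) := by rw [rXY]
           _ = (Y * Y) * X := (mul_assoc _ _ _).symm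
  | x' => show X' * (Y * Y) = (Y * Y) * X'
          calc X' * (Y * Y) = (X' * Y) * Y := (mul_assoc _ _ _).symm
            _ = (Y * X') * Y := by rw [rX'Y]
            _ = Y * (X' * Y) := mul_assoc _ _ _
            _ = Y * (Y * X') := by rw [rX'Y]
            _ = (Y * Y) * X' := (mul_assoc _ _ _).symm
  | y => show Y * (Y * Y) = (Y * Y) * Y
         rw [mul_assoc]
  | y' => show Y' * (Y * Y) = (Y * Y) * Y'
          calc Y' * (Y * Y) = (Y' * Y) * Y := by rw [mul_assoc]
            _ = Y := by rw [rY'Y, one_mul]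
            _ = (Y * Y) * Y' := by rw [mul_assoc, rYY', mul_one]

end TwAux

namespace TwAux

section ModulePart

variable {M : Type} [AddCommGroup M] [Module TwAlg M]
  [Module ℂ M] [IsScalarTower ℂ TwAlg M]

/-- The ℂ-linear endomorphism of `M` given by the action of `a : TwAlg`. -/
noncomputable def act (a : TwAlg) : Module.End ℂ M where
  toFun m := a • m
  map_add' := smul_add a
  map_smul' c m := smul_comm a c m

@[simp] lemma act_apply (a : TwAlg) (m : M) : act a m = a • m := rfl

/-- For central `z` and `μ : ℂ`, the `TwAlg`-linear endomorphism `m ↦ z • m - μ • m`. -/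
noncomputable def phi (z : TwAlg) (hz : ∀ a : TwAlg, a * z = z * a) (μ : ℂ) :
    M →ₗ[TwAlg] M where
  toFun m := z • m - μ • m
  map_add' m n := by simp only [smul_add]; abel
  map_smul' a m := by
    simp only [RingHom.id_apply, smul_sub]
    rw [← mul_smul, ← hz a, mul_smul, smul_comm μ a m]

@[simp] lemma phi_apply (z : TwAlg) (hz : ∀ a : TwAlg, a * z = z * a) (μ : ℂ) (m : M) :
    phi z hz μ m = z • m - μ • m := rfl

theorem exists_scalar (hM : IsSimpleModule TwAlg M) (z : TwAlg)
    (hz : ∀ a : TwAlg, a * z = z * a) :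
    ∃ c : ℂ, ∀ m : M, z • m = c • m := by
  classical
  have : Nontrivial M := IsSimpleModule.nontrivial TwAlg M
  by_contra hc
  push_neg at hc
  have hbij : ∀ μ : ℂ, Function.Bijective (phi (M := M) z hz μ) := by
    intro μ
    rcases (phi (M := M) z hz μ).bijective_or_eq_zero with h | h
    · exact h
    · obtain ⟨m, hm⟩ := hc μ
      refine absurd ?_ hm
      have := LinearMap.congr_fun h m
      simpa [phi, sub_eq_zero] using this
  obtain ⟨m₀, hm₀⟩ := exists_ne (0 : M)
  set T : Module.End ℂ M := act z with hT
  -- polynomials in T never kill a nonzero vector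
  have key : ∀ n : ℕ, ∀ p : Polynomial ℂ, p.natDegree ≤ n → p ≠ 0 → ∀ m : M, m ≠ 0 →
      (Polynomial.aeval T) p m ≠ 0 := by
    intro n
    induction n with
    | zero =>
      intro p hdeg hp m hm
      have h0 : p.natDegree = 0 := le_antisymm hdeg (Nat.zero_le _)
      have hpc : p = Polynomial.C (p.coeff 0) := Polynomial.eq_C_of_natDegree_eq_zero h0
      have hc0 : p.coeff 0 ≠ 0 := by
        intro h; apply hp; rw [hpc, h, _root_.map_zero]
      rw [hpc]
      simp only [Polynomial.aeval_C, Module.algebraMap_end_apply]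
      exact smul_ne_zero hc0 hm
    | succ n ih =>
      intro p hdeg hp m hm
      by_cases h0 : p.natDegree = 0
      · exact ih p (by omega) hp m hm
      · have hdpos : 0 < p.degree :=
          Polynomial.natDegree_pos_iff_degree_pos.mp (Nat.pos_of_ne_zero h0)
        obtain ⟨lam, hlam⟩ := Complex.exists_root hdpos
        obtain ⟨q, hq⟩ := (Polynomial.dvd_iff_isRoot.mpr hlam)
        have hqne : q ≠ 0 := by
          intro h; apply hp; rw [hq, h, mul_zero]
        have hqdeg : q.natDegree ≤ n := by
          have hXC : (Polynomial.X - Polynomial.C lam) ≠ (0 : Polynomial ℂ) :=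
            Polynomial.X_sub_C_ne_zero lam
          have := Polynomial.natDegree_mul hXC hqne
          rw [← hq, Polynomial.natDegree_X_sub_C] at this
          omega
        have hv : (Polynomial.aeval T) q m ≠ 0 := ih q hqdeg hqne m hm
        rw [hq, _root_.map_mul]
        intro hzero
        apply hv
        apply (hbij lam).injective
        have : (Polynomial.aeval T) (Polynomial.X - Polynomial.C lam)
            ((Polynomial.aeval T) q m) = 0 := hzero
        rw [_root_.map_sub, Polynomial.aeval_X, Polynomial.aeval_C] at this
        simp only [LinearMap.sub_apply, Module.algebraMap_end_apply] at this
        simpa [phi, hT] using this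
  -- the family of "resolvent" vectors
  set e : ℂ → (M ≃ₗ[TwAlg] M) := fun μ => LinearEquiv.ofBijective _ (hbij μ) with he
  set v : ℂ → M := fun μ => (e μ).symm m₀ with hv
  have hphiv : ∀ μ : ℂ, z • (v μ) - μ • (v μ) = m₀ := by
    intro μ
    exact (e μ).apply_symm_apply m₀
  have hvind : LinearIndependent ℂ v := by
    rw [linearIndependent_iff']
    intro s gg hsum i his
    set Q : ℂ → Polynomial ℂ :=
      fun j => ∏ μ ∈ s.erase j, (Polynomial.X - Polynomial.C μ) with hQ
    set P : Polynomial ℂ := ∏ μ ∈ s, (Polynomial.X - Polynomial.C μ) with hP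
    have hPQ : ∀ j ∈ s, (Polynomial.aeval T) P (v j) = (Polynomial.aeval T) (Q j) m₀ := by
      intro j hj
      have hsplit : P = Q j * (Polynomial.X - Polynomial.C j) := by
        rw [hP, hQ, Finset.prod_erase_mul s _ hj]
      rw [hsplit, _root_.map_mul, Module.End.mul_apply]
      congr 1
      have : (Polynomial.aeval T) (Polynomial.X - Polynomial.C j) (v j)
          = z • (v j) - j • (v j) := by
        rw [_root_.map_sub, Polynomial.aeval_X, Polynomial.aeval_C]
        simp [hT, Module.algebraMap_end_apply]
      rw [this, hphiv j]
    have hsum2 : ∑ j ∈ s, gg j • (Polynomial.aeval T) (Q j) m₀ = 0 := by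
      have := congrArg ((Polynomial.aeval T) P) hsum
      rw [_root_.map_sum, _root_.map_zero] at this
      rw [← this]
      refine Finset.sum_congr rfl fun j hj => ?_
      rw [_root_.map_smul, hPQ j hj]
    set q : Polynomial ℂ := ∑ j ∈ s, Polynomial.C (gg j) * Q j with hq
    have hqm : (Polynomial.aeval T) q m₀ = 0 := by
      rw [hq, _root_.map_sum, LinearMap.sum_apply] at *
      rw [← hsum2]
      refine Finset.sum_congr rfl fun j hj => ?_
      rw [_root_.map_mul, Module.End.mul_apply, Polynomial.aeval_C, Module.algebraMap_end_apply]
    have hq0 : q = 0 := by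
      by_contra hqne
      exact key q.natDegree q le_rfl hqne m₀ hm₀ hqm
    have := congrArg (Polynomial.eval i) hq0
    rw [hq, Polynomial.eval_zero] at this
    rw [Polynomial.eval_finset_sum] at this
    rw [Finset.sum_eq_single i] at this
    · rw [Polynomial.eval_mul, Polynomial.eval_C, hQ, Polynomial.eval_prod] at this
      have hne : ∏ μ ∈ s.erase i, (i - μ) ≠ 0 := by
        rw [Finset.prod_ne_zero_iff]
        intro μ hμ
        have hne' := Finset.ne_of_mem_erase hμ
        intro h
        exact hne' (sub_eq_zero.mp h).symm
      simp only [Polynomial.eval_sub, Polynomial.eval_X, Polynomial.eval_C] at this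
      exact (mul_eq_zero.mp this).resolve_right hne
    · intro j hj hji
      rw [Polynomial.eval_mul, hQ, Polynomial.eval_prod]
      apply mul_eq_zero_of_right
      refine Finset.prod_eq_zero (Finset.mem_erase.mpr ⟨hji.symm, his⟩) ?_
      simp
    · intro h; exact absurd his h
  -- cardinality contradiction
  have hcard : (Cardinal.mk ℂ) ≤ Module.rank ℂ M := hvind.cardinal_le_rank
  have hrank : Module.rank ℂ M ≤ Cardinal.aleph0 := by
    have hspan : Submodule.span TwAlg {m₀} = ⊤ := by
      rcases eq_bot_or_eq_top (Submodule.span TwAlg {m₀}) with h | h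
      · exfalso
        apply hm₀
        have : m₀ ∈ Submodule.span TwAlg {m₀} := Submodule.mem_span_singleton_self m₀
        rw [h] at this
        simpa using this
      · exact h
    set L2 : TwAlg →ₗ[ℂ] M :=
      { toFun := fun a => a • m₀
        map_add' := fun a b => add_smul a b m₀
        map_smul' := fun c a => smul_assoc c a m₀ } with hL2
    have hsurj : Function.Surjective
        (L2 ∘ₗ (RingQuot.mkAlgHom ℂ TwRel).toLinearMap) := by
      intro m
      have hmem : m ∈ Submodule.span TwAlg {m₀} := by rw [hspan]; trivial
      obtain ⟨a, ha⟩ := Submodule.mem_span_singleton.mp hmem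
      obtain ⟨p, hp⟩ := RingQuot.mkAlgHom_surjective ℂ TwRel a
      exact ⟨p, by simp [hL2, hp, ha]⟩
    have := LinearMap.rank_le_of_surjective _ hsurj
    refine this.trans ?_
    rw [FreeAlgebra.rank_eq, Cardinal.lift_id]
    haveI : Finite TwGen := by
      exact Finite.intro (α := TwGen) (n := 5)
        ⟨fun t => match t with
          | TwGen.s => 0 | TwGen.x => 1 | TwGen.x' => 2 | TwGen.y => 3 | TwGen.y' => 4,
         fun i => match i with
          | 0 => TwGen.s | 1 => TwGen.x | 2 => TwGen.x' | 3 => TwGen.y | 4 => TwGen.y',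
         by intro t; cases t <;> rfl,
         by intro i; fin_cases i <;> rfl⟩
    haveI : Nonempty TwGen := ⟨TwGen.s⟩
    rw [show (Cardinal.mk (List TwGen)) = Cardinal.aleph0 from
      Cardinal.mk_list_eq_aleph0 TwGen]
  have : (Cardinal.mk ℂ) ≤ Cardinal.aleph0 := hcard.trans hrank
  rw [Cardinal.mk_complex] at this
  exact absurd this (not_le.mpr Cardinal.aleph0_lt_continuum)

end ModulePart

end TwAux

namespace TwAux

section Main

local notation "S" => g TwGen.s
local notation "X" => g TwGen.x
local notation "X'" => g TwGen.x'
local notation "Y" => g TwGen.y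
local notation "Y'" => g TwGen.y'

variable {M : Type} [AddCommGroup M] [Module TwAlg M]
  [Module ℂ M] [IsScalarTower ℂ TwAlg M]

theorem main (hM : IsSimpleModule TwAlg M) : Module.finrank ℂ M = 2 := by
  classical
  have hnt : Nontrivial M := IsSimpleModule.nontrivial TwAlg M
  obtain ⟨a, ha⟩ := exists_scalar hM cU cU_central
  obtain ⟨b, hb⟩ := exists_scalar hM cV cV_central
  have hX' : ∀ m : M, X' • m = a • m - X • m := by
    intro m
    have h := ha m
    rw [cU, add_smul] at h
    exact eq_sub_of_add_eq' h
  have hXX : ∀ m : M, X • (X • m) = a • (X • m) - m := by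
    intro m
    have h1 : X • (X' • m) = m := by rw [← mul_smul, rXX', one_smul]
    rw [hX' m, smul_sub, smul_comm X a m] at h1
    rw [sub_eq_iff_eq_add] at h1
    rw [h1]; abel
  have hYY : ∀ m : M, Y • (Y • m) = b • m := by
    intro m
    have h := hb m
    rw [cV, mul_smul] at h
    exact h
  obtain ⟨d, hd⟩ := IsAlgClosed.exists_pow_nat_eq (k := ℂ) (a * a - 4) (n := 2) (by norm_num)
  set α : ℂ := (a + d) / 2 with hαdef
  have hroot : α * α - a * α + 1 = 0 := by
    rw [hαdef]; linear_combination hd / 4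
  have hroot' : (a - α) * (a - α) - a * (a - α) + 1 = 0 := by linear_combination hroot
  have hXeig : ∃ β : ℂ, (β * β - a * β + 1 = 0) ∧ ∃ m : M, m ≠ 0 ∧ X • m = β • m := by
    by_cases hcase : ∀ w : M, X • w = (a - α) • w
    · obtain ⟨m₀, hm₀⟩ := exists_ne (0 : M)
      exact ⟨a - α, hroot', m₀, hm₀, hcase m₀⟩
    · push_neg at hcase
      obtain ⟨w, hw⟩ := hcase
      refine ⟨α, hroot, X • w - (a - α) • w, sub_ne_zero.mpr hw, ?_⟩
      have hαa : α * (a - α) = 1 := by linear_combination -hroot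
      calc X • (X • w - (a - α) • w)
          = X • (X • w) - (a - α) • (X • w) := by
            rw [smul_sub, smul_comm X (a - α) w]
        _ = a • (X • w) - w - (a - α) • (X • w) := by rw [hXX w]
        _ = α • (X • w) - w := by rw [sub_smul]; abel
        _ = α • (X • w - (a - α) • w) := by
            rw [smul_sub, smul_smul, hαa, one_smul]
  obtain ⟨β, hβroot, m₁, hm₁, hXm₁⟩ := hXeig
  have hβ0 : β ≠ 0 := by
    intro h; rw [h] at hβroot; simp at hβroot
  obtain ⟨γ, hγ⟩ := IsAlgClosed.exists_pow_nat_eq (k := ℂ) b (n := 2) (by norm_num)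
  have hYeig : ∃ δ : ℂ, ∃ m : M, m ≠ 0 ∧ X • m = β • m ∧ Y • m = δ • m := by
    by_cases hcase : Y • m₁ - γ • m₁ = 0
    · exact ⟨γ, m₁, hm₁, hXm₁, by rw [← sub_eq_zero]; exact hcase⟩
    · refine ⟨-γ, Y • m₁ - γ • m₁, hcase, ?_, ?_⟩
      · have hcomm : X • (Y • m₁) = Y • (X • m₁) := by
          rw [← mul_smul, ← mul_smul, rXY]
        calc X • (Y • m₁ - γ • m₁)
            = X • (Y • m₁) - X • (γ • m₁) := smul_sub _ _ _
          _ = Y • (X • m₁) - γ • (X • m₁) := by rw [hcomm, smul_comm X γ m₁]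
          _ = Y • (β • m₁) - γ • (β • m₁) := by rw [hXm₁]
          _ = β • (Y • m₁) - (γ * β) • m₁ := by rw [smul_comm Y β m₁, smul_smul]
          _ = β • (Y • m₁ - γ • m₁) := by rw [smul_sub, smul_smul, mul_comm]
      · calc Y • (Y • m₁ - γ • m₁)
            = Y • (Y • m₁) - Y • (γ • m₁) := smul_sub _ _ _
          _ = b • m₁ - γ • (Y • m₁) := by rw [hYY m₁, smul_comm Y γ m₁]
          _ = (-γ) • (Y • m₁ - γ • m₁) := by
              rw [smul_sub, smul_smul, neg_smul γ (Y • m₁),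
                show (-γ : ℂ) * γ = -(γ * γ) from by ring, neg_smul (γ * γ) m₁,
                show b = γ * γ from by rw [← hγ]; ring]
              abel
  obtain ⟨δ, m₂, hm₂, hXm₂, hYm₂⟩ := hYeig
  have hδ0 : δ ≠ 0 := by
    intro h
    apply hm₂
    have h1 : Y' • (Y • m₂) = m₂ := by rw [← mul_smul, rY'Y, one_smul]
    rw [hYm₂, h, zero_smul, smul_zero] at h1
    exact h1.symm
  have hX'm₂ : X' • m₂ = β⁻¹ • m₂ := by
    have h1 : X' • (X • m₂) = m₂ := by rw [← mul_smul, rX'X, one_smul]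
    rw [hXm₂, smul_comm X' β m₂] at h1
    have h2 := congrArg (fun w => β⁻¹ • w) h1
    simpa [smul_smul, inv_mul_cancel₀ hβ0] using h2
  have hY'm₂ : Y' • m₂ = δ⁻¹ • m₂ := by
    have h1 : Y' • (Y • m₂) = m₂ := by rw [← mul_smul, rY'Y, one_smul]
    rw [hYm₂, smul_comm Y' δ m₂] at h1
    have h2 := congrArg (fun w => δ⁻¹ • w) h1
    simpa [smul_smul, inv_mul_cancel₀ hδ0] using h2
  set m₃ : M := S • m₂ with hm₃def
  have hSm₃ : S • m₃ = m₂ := by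
    rw [hm₃def, ← mul_smul, rSS, one_smul]
  have hm₃ : m₃ ≠ 0 := by
    intro h
    apply hm₂
    rw [← hSm₃, h, smul_zero]
  have hXm₃ : X • m₃ = β⁻¹ • m₃ := by
    rw [hm₃def, ← mul_smul, rXS, mul_smul, hX'm₂, smul_comm S β⁻¹ m₂]
  have hX'm₃ : X' • m₃ = β • m₃ := by
    rw [hm₃def, ← mul_smul, ← rSX, mul_smul, hXm₂, smul_comm S β m₂]
  have hYm₃ : Y • m₃ = (-δ) • m₃ := by
    rw [hm₃def, ← mul_smul, rYS]
    rw [show (-(S * Y)) • m₂ = -((S * Y) • m₂) from by exact neg_smul (S * Y) m₂]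
    rw [mul_smul, hYm₂, smul_comm S δ m₂, neg_smul]
  have hY'm₃ : Y' • m₃ = (-δ⁻¹) • m₃ := by
    rw [hm₃def, ← mul_smul, rY'S]
    rw [show (-(S * Y')) • m₂ = -((S * Y') • m₂) from by exact neg_smul (S * Y') m₂]
    rw [mul_smul, hY'm₂, smul_comm S δ⁻¹ m₂, neg_smul]
  set W : Submodule ℂ M := Submodule.span ℂ {m₂, m₃} with hWdef
  have hm₂W : m₂ ∈ W := Submodule.subset_span (by left; rfl)
  have hm₃W : m₃ ∈ W := Submodule.subset_span (by right; rfl)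
  have hgen : ∀ t : TwGen, ∀ w ∈ W, g t • w ∈ W := by
    intro t w hw
    induction hw using Submodule.span_induction with
    | mem u hu =>
      rcases hu with rfl | rfl
      · cases t with
        | s => exact hm₃W
        | x => rw [hXm₂]; exact W.smul_mem β hm₂W
        | x' => rw [hX'm₂]; exact W.smul_mem β⁻¹ hm₂W
        | y => rw [hYm₂]; exact W.smul_mem δ hm₂W
        | y' => rw [hY'm₂]; exact W.smul_mem δ⁻¹ hm₂W
      · cases t with
        | s => rw [hSm₃]; exact hm₂W
        | x => rw [hXm₃]; exact W.smul_mem β⁻¹ hm₃W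
        | x' => rw [hX'm₃]; exact W.smul_mem β hm₃W
        | y => rw [hYm₃]; exact W.smul_mem (-δ) hm₃W
        | y' => rw [hY'm₃]; exact W.smul_mem (-δ⁻¹) hm₃W
    | zero => rw [smul_zero]; exact W.zero_mem
    | add u v hu hv ihu ihv => rw [smul_add]; exact W.add_mem ihu ihv
    | smul c u hu ihu => rw [smul_comm]; exact W.smul_mem c ihu
  have hact : ∀ aa : TwAlg, ∀ w ∈ W, aa • w ∈ W := by
    intro aa
    obtain ⟨p, rfl⟩ := RingQuot.mkAlgHom_surjective ℂ TwRel aa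
    induction p using FreeAlgebra.induction with
    | grade0 r =>
      intro w hw
      rw [AlgHom.commutes, algebraMap_smul]
      exact W.smul_mem r hw
    | grade1 t => exact hgen t
    | mul p q hp hq =>
      intro w hw
      rw [_root_.map_mul, mul_smul]
      exact hp _ (hq _ hw)
    | add p q hp hq =>
      intro w hw
      rw [_root_.map_add, add_smul]
      exact W.add_mem (hp _ hw) (hq _ hw)
  set N : Submodule TwAlg M :=
    { carrier := (W : Set M)
      add_mem' := fun hu hv => W.add_mem hu hv
      zero_mem' := W.zero_mem
      smul_mem' := fun aa {w} hw => hact aa w hw } with hNdef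
  have hNtop : N = ⊤ := by
    rcases eq_bot_or_eq_top N with h | h
    · exfalso
      apply hm₂
      have hmem : m₂ ∈ N := hm₂W
      rw [h] at hmem
      simpa using hmem
    · exact h
  have hWtop : W = ⊤ := by
    rw [Submodule.eq_top_iff']
    intro m
    have hmem : m ∈ N := by rw [hNtop]; trivial
    exact hmem
  have hind : LinearIndependent ℂ ![m₂, m₃] := by
    rw [linearIndependent_fin2]
    constructor
    · simpa using hm₃
    · intro c hc
      have hc' : m₂ = c • m₃ := by
        have h0 : (![m₂, m₃] : Fin 2 → M) 0 = m₂ := rfl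
        have h1 : (![m₂, m₃] : Fin 2 → M) 1 = m₃ := rfl
        rw [h0, h1] at hc
        exact hc.symm
      apply hm₂
      have h1 : Y • m₂ = Y • (c • m₃) := by rw [← hc']
      rw [hYm₂, smul_comm Y c m₃, hYm₃] at h1
      rw [hc', smul_smul δ c, smul_smul c (-δ)] at h1
      have h2 : (2 * (δ * c)) • m₃ = 0 := by
        have h3 := sub_eq_zero.mpr h1
        rw [← sub_smul, show δ * c - c * -δ = 2 * (δ * c) from by ring] at h3
        exact h3
      rcases smul_eq_zero.mp h2 with h | h
      · have hc0 : c = 0 := by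
          rcases mul_eq_zero.mp h with h' | h'
          · norm_num at h'
          · exact (mul_eq_zero.mp h').resolve_left hδ0
        rw [hc', hc0, zero_smul]
      · rw [hc', h, smul_zero]
  have hspan : ⊤ ≤ Submodule.span ℂ (Set.range ![m₂, m₃]) := by
    rw [show Set.range ![m₂, m₃] = {m₂, m₃} from by
      ext u
      simp [Set.mem_range, Fin.exists_fin_two]
      tauto]
    rw [show Submodule.span ℂ ({m₂, m₃} : Set M) = W from hWdef.symm, hWtop]
  let bas : Module.Basis (Fin 2) ℂ M := Module.Basis.mk hind hspan
  rw [Module.finrank_eq_card_basis bas, Fintype.card_fin]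

end Main

end TwAux

/-- Every simple module over the twisted algebra A is 2-dimensional over ℂ
(the ℂ-action being the one coming from the structure map ℂ → A). -/
theorem twisted_alg_simple_modules_two_dimensional
    (M : Type) [AddCommGroup M] [Module TwAlg M]
    [Module ℂ M] [IsScalarTower ℂ TwAlg M]
    (hM : IsSimpleModule TwAlg M) :
    Module.finrank ℂ M = 2 := by
  exact TwAux.main hM
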